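/- Let A be an m×n integer matrix that is totally unimodular, let b ∈ ℤ^m, and let c ∈ ℚ^n. If x* ∈ ℚ^n satisfies A x* ≤ b and c·x* ≥ c·x for every x ∈ ℚ^n with A x ≤ b (i.e., x* is an optimal solution of the linear program max c·x subject to Ax ≤ b over the rationals), then there exists an integral vector z ∈ ℤ^n with A z ≤ b and c·z = c·x*. In particular, the integer program max c·x subject to Ax ≤ b, x ∈ ℤ^n, has the same optimal value as its LP relaxation. -/

import Mathlib

/-- An integer matrix is totally unimodular if every square submatrix
(given by a choice of distinct rows and distinct columns) has determinant
in `{-1, 0, 1}`. -/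
def IsTotallyUnimodularZ {m n : ℕ} (A : Matrix (Fin m) (Fin n) ℤ) : Prop :=
  ∀ (k : ℕ) (f : Fin k → Fin m) (g : Fin k → Fin n),
    Function.Injective f → Function.Injective g →
      (A.submatrix f g).det ∈ ({-1, 0, 1} : Set ℤ)

open Matrix

lemma mem_signRange_iff {x : ℤ} :
    x ∈ Set.range (SignType.cast : SignType → ℤ) ↔ x ∈ ({-1, 0, 1} : Set ℤ) := by
  constructor
  · rintro ⟨s, rfl⟩
    cases s <;> simp
  · rintro (rfl | rfl | rfl)
    exacts [⟨SignType.neg, rfl⟩, ⟨SignType.zero, rfl⟩, ⟨SignType.pos, rfl⟩]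

lemma fromRows_neg_isTotallyUnimodular {m n : ℕ} {A : Matrix (Fin m) (Fin n) ℤ}
    (hA : A.IsTotallyUnimodular) : (fromRows A (-A)).IsTotallyUnimodular := by
  rw [Matrix.isTotallyUnimodular_iff]
  intro k f g
  have hsub : (fromRows A (-A)).submatrix f g =
      Matrix.of (fun i j => (Sum.elim (fun _ => (1:ℤ)) (fun _ => -1) (f i)) *
        (A.submatrix (fun i => Sum.elim id id (f i)) g) i j) := by
    ext i j
    cases hfi : f i <;> simp [hfi]
  rw [hsub, Matrix.det_mul_column]
  have h1 : (∏ i, Sum.elim (fun _ => (1:ℤ)) (fun _ => -1) (f i)) ∈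
      Set.range (SignType.cast : SignType → ℤ) := by
    apply Finset.prod_induction
    · rintro a b ⟨s, rfl⟩ ⟨t, rfl⟩
      exact ⟨s * t, by push_cast; ring⟩
    · exact ⟨1, rfl⟩
    · intro i _
      cases hfi : f i
      · exact ⟨1, by simp [hfi]⟩
      · exact ⟨-1, by simp [hfi]⟩
  have h2 := (Matrix.isTotallyUnimodular_iff A).mp hA k (fun i => Sum.elim id id (f i)) g
  obtain ⟨s, hs⟩ := h1
  obtain ⟨t, ht⟩ := h2
  exact ⟨s * t, by rw [← hs, ← ht]; push_cast; ring⟩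

lemma bigM_isTotallyUnimodular {m n : ℕ} {A : Matrix (Fin m) (Fin n) ℤ}
    (hA : A.IsTotallyUnimodular) :
    (fromRows (fromRows A (-A))
      (fromRows (1 : Matrix (Fin n) (Fin n) ℤ) (-(1 : Matrix (Fin n) (Fin n) ℤ)))).IsTotallyUnimodular := by
  apply (fromRows_neg_isTotallyUnimodular hA).fromRows_unitlike
  intro _ i
  cases i with
  | inl j =>
      exact ⟨j, 1, by ext x; simp [Matrix.one_apply, Pi.single_apply, eq_comm]⟩
  | inr j =>
      exact ⟨j, -1, by ext x; simp [Matrix.one_apply, Pi.single_apply, eq_comm, apply_ite Neg.neg]⟩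

lemma sum_mul_addsmul {n : ℕ} (a x y : Fin n → ℚ) (t : ℚ) :
    ∑ j, a j * (x j + t * y j) = (∑ j, a j * x j) + t * ∑ j, a j * y j := by
  rw [Finset.mul_sum, ← Finset.sum_add_distrib]
  exact Finset.sum_congr rfl (fun j _ => by ring)

lemma exists_int_solution {n : ℕ} {ι : Type} [Fintype ι] [DecidableEq ι]
    (M : Matrix ι (Fin n) ℤ) (hTU : M.IsTotallyUnimodular)
    (hker : ∀ v : Fin n → ℚ, (∀ i, ∑ j, (M i j : ℚ) * v j = 0) → v = 0)
    (d : ι → ℤ) (x : Fin n → ℚ)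
    (hx : ∀ i, ∑ j, (M i j : ℚ) * x j ≤ (d i : ℚ)) :
    ∃ z : Fin n → ℤ, ∀ i, ∑ j, (M i j : ℚ) * (z j : ℚ) ≤ (d i : ℚ) := by
  classical
  suffices H : ∀ k : ℕ, ∀ x : Fin n → ℚ, (∀ i, ∑ j, (M i j : ℚ) * x j ≤ (d i : ℚ)) →
      (Finset.univ.filter (fun i => ∑ j, (M i j : ℚ) * x j < (d i : ℚ))).card ≤ k →
      ∃ z : Fin n → ℤ, ∀ i, ∑ j, (M i j : ℚ) * (z j : ℚ) ≤ (d i : ℚ) by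
    exact H _ x hx le_rfl
  intro k
  induction k using Nat.strong_induction_on with
  | _ k ih =>
  intro x hx hcard
  by_cases hv : ∃ v : Fin n → ℚ, v ≠ 0 ∧
      ∀ i, (∑ j, (M i j : ℚ) * x j = (d i : ℚ)) → ∑ j, (M i j : ℚ) * v j = 0
  · -- move towards more tight constraints
    obtain ⟨v, hv0, hvt⟩ := hv
    obtain ⟨i₀, hi₀⟩ : ∃ i, ∑ j, (M i j : ℚ) * v j ≠ 0 := by
      by_contra h
      push_neg at h
      exact hv0 (hker v h)
    obtain ⟨w, hwt, i₁, hw1⟩ : ∃ w : Fin n → ℚ,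
        (∀ i, (∑ j, (M i j : ℚ) * x j = (d i : ℚ)) → ∑ j, (M i j : ℚ) * w j = 0) ∧
        ∃ i, 0 < ∑ j, (M i j : ℚ) * w j := by
      rcases lt_or_gt_of_ne hi₀ with h | h
      · refine ⟨fun j => -v j, fun i hi => ?_, i₀, ?_⟩
        · simp only [mul_neg, Finset.sum_neg_distrib]
          rw [hvt i hi]; ring
        · simp only [mul_neg, Finset.sum_neg_distrib]
          linarith
      · exact ⟨v, hvt, i₀, h⟩
    set P : Finset ι := Finset.univ.filter (fun i => 0 < ∑ j, (M i j : ℚ) * w j) with hPdef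
    have hP : P.Nonempty := ⟨i₁, Finset.mem_filter.mpr ⟨Finset.mem_univ _, hw1⟩⟩
    have hPnt : ∀ i ∈ P, ∑ j, (M i j : ℚ) * x j < (d i : ℚ) := by
      intro i hi
      rcases lt_or_eq_of_le (hx i) with h | h
      · exact h
      · exfalso
        have := hwt i h
        have := (Finset.mem_filter.mp hi).2
        linarith
    set f : ι → ℚ := fun i => ((d i : ℚ) - ∑ j, (M i j : ℚ) * x j) / (∑ j, (M i j : ℚ) * w j)
      with hfdef
    set t : ℚ := P.inf' hP f with htdef
    have hMw : ∀ i ∈ P, 0 < ∑ j, (M i j : ℚ) * w j := fun i hi => (Finset.mem_filter.mp hi).2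
    have ht : 0 < t := by
      rw [htdef, Finset.lt_inf'_iff]
      intro i hi
      exact div_pos (by linarith [hPnt i hi]) (hMw i hi)
    set x' : Fin n → ℚ := fun j => x j + t * w j with hx'def
    have hMx' : ∀ i, ∑ j, (M i j : ℚ) * x' j
        = (∑ j, (M i j : ℚ) * x j) + t * ∑ j, (M i j : ℚ) * w j := by
      intro i
      exact sum_mul_addsmul _ _ _ _
    have hfeas' : ∀ i, ∑ j, (M i j : ℚ) * x' j ≤ (d i : ℚ) := by
      intro i
      rw [hMx' i]
      rcases le_or_gt (∑ j, (M i j : ℚ) * w j) 0 with h | h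
      · nlinarith [hx i]
      · have hiP : i ∈ P := Finset.mem_filter.mpr ⟨Finset.mem_univ _, h⟩
        have h1 : t ≤ f i := Finset.inf'_le f hiP
        have h2 : t * (∑ j, (M i j : ℚ) * w j) ≤ (d i : ℚ) - ∑ j, (M i j : ℚ) * x j :=
          (le_div_iff₀ h).mp h1
        linarith
    obtain ⟨istar, histar, htstar⟩ := Finset.exists_mem_eq_inf' hP f
    have hstar : ∑ j, (M istar j : ℚ) * x' j = (d istar : ℚ) := by
      have ht2 : t = f istar := htdef.trans htstar
      have hden := hMw istar histar
      rw [hMx' istar, ht2]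
      simp only [hfdef]
      rw [div_mul_cancel₀ _ (ne_of_gt hden)]
      ring
    have hsubset : (Finset.univ.filter (fun i => ∑ j, (M i j : ℚ) * x' j < (d i : ℚ)))
        ⊆ (Finset.univ.filter (fun i => ∑ j, (M i j : ℚ) * x j < (d i : ℚ))) := by
      intro i hi
      simp only [Finset.mem_filter, Finset.mem_univ, true_and] at hi ⊢
      rcases lt_or_eq_of_le (hx i) with h | h
      · exact h
      · exfalso
        have h0 := hwt i h
        rw [hMx' i, h0, mul_zero, add_zero, h] at hi
        exact lt_irrefl _ hi
    have hmem : istar ∈ (Finset.univ.filter (fun i => ∑ j, (M i j : ℚ) * x j < (d i : ℚ))) :=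
      Finset.mem_filter.mpr ⟨Finset.mem_univ _, hPnt istar histar⟩
    have hnotmem : istar ∉ (Finset.univ.filter
        (fun i => ∑ j, (M i j : ℚ) * x' j < (d i : ℚ))) := by
      simp only [Finset.mem_filter, Finset.mem_univ, true_and, hstar]
      exact lt_irrefl _
    have hcard' : (Finset.univ.filter (fun i => ∑ j, (M i j : ℚ) * x' j < (d i : ℚ))).card
        < (Finset.univ.filter (fun i => ∑ j, (M i j : ℚ) * x j < (d i : ℚ))).card :=
      Finset.card_lt_card ((Finset.ssubset_iff_of_subset hsubset).mpr ⟨istar, hmem, hnotmem⟩)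
    exact ih _ (lt_of_lt_of_le hcard' hcard) x' hfeas' le_rfl
  · -- Cramer: tight rows pin down x, which is therefore integral
    push_neg at hv
    have htight : ∀ v : Fin n → ℚ,
        (∀ i, (∑ j, (M i j : ℚ) * x j = (d i : ℚ)) → ∑ j, (M i j : ℚ) * v j = 0) → v = 0 := by
      intro v hvt
      by_contra hv0
      obtain ⟨i, hi, hne⟩ := hv v hv0
      exact hne (hvt i hi)
    set T : Set (Fin n → ℚ) :=
      {wr | ∃ i, (∑ j, (M i j : ℚ) * x j = (d i : ℚ)) ∧ wr = fun j => (M i j : ℚ)} with hTdef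
    have hspan : Submodule.span ℚ T = ⊤ := by
      by_contra hne
      obtain ⟨φ, hφ0, hφ⟩ := Submodule.exists_dual_map_eq_bot_of_lt_top
        (lt_top_iff_ne_top.mpr hne) inferInstance
      set v : Fin n → ℚ := fun i => φ (fun j => if i = j then 1 else 0) with hvdef
      have hv0 : v ≠ 0 := by
        intro h0
        apply hφ0
        refine LinearMap.ext fun wvec => ?_
        rw [LinearMap.pi_apply_eq_sum_univ φ wvec]
        have : ∀ i, φ (fun j => if i = j then 1 else 0) = 0 := fun i => congrFun h0 i
        simp [this]
      have hvanish : ∀ i, (∑ j, (M i j : ℚ) * x j = (d i : ℚ)) →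
          ∑ j, (M i j : ℚ) * v j = 0 := by
        intro i hi
        have hmem : (fun j => (M i j : ℚ)) ∈ Submodule.span ℚ T :=
          Submodule.subset_span ⟨i, hi, rfl⟩
        have hphi : φ (fun j => (M i j : ℚ)) = 0 := by
          have : φ (fun j => (M i j : ℚ)) ∈ Submodule.map φ (Submodule.span ℚ T) :=
            Submodule.mem_map_of_mem hmem
          rw [hφ] at this
          exact (Submodule.mem_bot ℚ).mp this
        rw [LinearMap.pi_apply_eq_sum_univ φ (fun j => (M i j : ℚ))] at hphi
        rw [← hphi]
        exact Finset.sum_congr rfl (fun j _ => by rw [hvdef]; simp [mul_comm])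
      exact hv0 (htight v hvanish)
    obtain ⟨s, hsT, hsspan, hsli⟩ := exists_linearIndependent ℚ T
    have hfin : s.Finite := hsli.setFinite
    letI : Fintype s := hfin.fintype
    have hbasis : Module.Basis s ℚ (Fin n → ℚ) := Module.Basis.mk hsli (by
      rw [Subtype.range_coe, hsspan, hspan])
    have hcardn : Fintype.card s = n := by
      have h1 := Module.finrank_eq_card_basis hbasis
      rw [Module.finrank_fin_fun] at h1
      exact h1.symm
    set e0 : Fin n ≃ s := (Fintype.equivFinOfCardEq hcardn).symm with he0def
    have hmemT : ∀ wv : s, (wv : Fin n → ℚ) ∈ T := fun wv => hsT wv.2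
    set e' : Fin n → ι := fun kk => (hmemT (e0 kk)).choose with he'def
    have htight' : ∀ kk, ∑ j, (M (e' kk) j : ℚ) * x j = (d (e' kk) : ℚ) :=
      fun kk => (hmemT (e0 kk)).choose_spec.1
    have hrow : ∀ kk, (fun j => (M (e' kk) j : ℚ)) = ((e0 kk : Fin n → ℚ)) :=
      fun kk => ((hmemT (e0 kk)).choose_spec.2).symm
    set B : Matrix (Fin n) (Fin n) ℤ := M.submatrix e' id with hBdef
    set Q : Matrix (Fin n) (Fin n) ℚ := B.map (Int.cast : ℤ → ℚ) with hQdef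
    have hQapp : ∀ kk j, Q kk j = (M (e' kk) j : ℚ) := fun kk j => rfl
    have hQdet : Q.det = ((B.det : ℤ) : ℚ) := ((RingHom.map_det (Int.castRingHom ℚ) B)).symm
    have hdet_ne : Q.det ≠ 0 := by
      intro h0
      obtain ⟨wv, hw0, hwv⟩ := Matrix.exists_vecMul_eq_zero_iff.mpr h0
      have hli2 : LinearIndependent ℚ (fun kk : Fin n => ((e0 kk : Fin n → ℚ))) :=
        hsli.comp e0 e0.injective
      have hall := Fintype.linearIndependent_iff.mp hli2 wv (by
        funext j
        have := congrFun hwv j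
        simp only [Matrix.vecMul, dotProduct, Pi.zero_apply] at this
        simp only [Finset.sum_apply, Pi.smul_apply, smul_eq_mul, Pi.zero_apply]
        rw [← this]
        refine Finset.sum_congr rfl (fun kk _ => ?_)
        rw [← congrFun (hrow kk) j, hQapp])
      exact hw0 (funext hall)
    have hBdet_ne : B.det ≠ 0 := by
      intro h0
      rw [hQdet, h0] at hdet_ne
      simp at hdet_ne
    have hBdet_mem := (Matrix.isTotallyUnimodular_iff M).mp hTU n e' id
    have hBunit : IsUnit B.det := by
      rw [mem_signRange_iff] at hBdet_mem
      rcases hBdet_mem with h | h | h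
      · rw [h]; exact (isUnit_one.neg)
      · exact absurd h hBdet_ne
      · rw [h]; exact isUnit_one
    set z : Fin n → ℤ := B⁻¹ *ᵥ (fun kk => d (e' kk)) with hzdef
    have hBz : B *ᵥ z = fun kk => d (e' kk) := by
      rw [hzdef, Matrix.mulVec_mulVec, Matrix.mul_nonsing_inv _ hBunit, Matrix.one_mulVec]
    have hBz' : ∀ kk, ∑ j, (M (e' kk) j : ℚ) * (z j : ℚ) = (d (e' kk) : ℚ) := by
      intro kk
      have := congrFun hBz kk
      simp only [Matrix.mulVec, dotProduct] at this
      have : ((∑ j, B kk j * z j : ℤ) : ℚ) = ((d (e' kk) : ℤ) : ℚ) := by rw [this]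
      push_cast at this
      exact this
    have hxz : x = fun j => ((z j : ℚ)) := by
      by_contra hne
      have hu : (fun j => x j - (z j : ℚ)) ≠ 0 := by
        intro h
        apply hne
        funext j
        have := congrFun h j
        simp only [Pi.zero_apply] at this
        linarith
      apply hdet_ne
      rw [← Matrix.exists_mulVec_eq_zero_iff]
      refine ⟨_, hu, ?_⟩
      funext kk
      simp only [Matrix.mulVec, dotProduct, Pi.zero_apply]
      have : ∀ j, Q kk j * (x j - (z j : ℚ)) = (M (e' kk) j : ℚ) * x j
          - (M (e' kk) j : ℚ) * (z j : ℚ) := fun j => by rw [hQapp]; ring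
      rw [Finset.sum_congr rfl (fun j _ => this j), Finset.sum_sub_distrib,
        htight' kk, hBz' kk, sub_self]
    refine ⟨z, fun i => ?_⟩
    have : ∑ j, (M i j : ℚ) * (z j : ℚ) = ∑ j, (M i j : ℚ) * x j := by
      rw [hxz]
    rw [this]
    exact hx i

lemma sum_one_row {n : ℕ} (y : Fin n → ℚ) (j : Fin n) :
    ∑ j', (((1 : Matrix (Fin n) (Fin n) ℤ) j j' : ℤ) : ℚ) * y j' = y j := by
  rw [Finset.sum_eq_single j]
  · simp [Matrix.one_apply_eq]
  · intro b _ hb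
    simp [Matrix.one_apply_ne (Ne.symm hb)]
  · simp

/-- If `A` is totally unimodular, `b` is integral, and `x*` is an optimal
solution of the linear program `max cᵀx s.t. Ax ≤ b` over the rationals,
then there is an integral vector `z` that is feasible and attains the same
objective value; in particular the integer program has the same optimal
value as its LP relaxation. -/
theorem stmt0 {m n : ℕ} (A : Matrix (Fin m) (Fin n) ℤ)
    (hTU : IsTotallyUnimodularZ A)
    (b : Fin m → ℤ) (c : Fin n → ℚ) (xstar : Fin n → ℚ)
    (hfeas : ∀ i, ∑ j, (A i j : ℚ) * xstar j ≤ (b i : ℚ))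
    (hopt : ∀ x : Fin n → ℚ, (∀ i, ∑ j, (A i j : ℚ) * x j ≤ (b i : ℚ)) →
      ∑ j, c j * x j ≤ ∑ j, c j * xstar j) :
    ∃ z : Fin n → ℤ, (∀ i, ∑ j, A i j * z j ≤ b i) ∧
      ∑ j, c j * (z j : ℚ) = ∑ j, c j * xstar j := by
  classical
  have hTU' : A.IsTotallyUnimodular := by
    intro k f g hf hg
    rw [mem_signRange_iff]
    exact hTU k f g hf hg
  set S : Fin m → ℚ := fun i => ∑ j, (A i j : ℚ) * xstar j with hSdef
  set MM : Matrix ((Fin m ⊕ Fin m) ⊕ (Fin n ⊕ Fin n)) (Fin n) ℤ :=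
    fromRows (fromRows A (-A)) (fromRows 1 (-(1 : Matrix (Fin n) (Fin n) ℤ))) with hMMdef
  set dd : ((Fin m ⊕ Fin m) ⊕ (Fin n ⊕ Fin n)) → ℤ :=
    Sum.elim (Sum.elim b (fun i => -⌊S i⌋))
      (Sum.elim (fun j => ⌈xstar j⌉) (fun j => -⌊xstar j⌋)) with hdddef
  have hMMTU : MM.IsTotallyUnimodular := bigM_isTotallyUnimodular hTU'
  have hnegrow : ∀ (y : Fin n → ℚ) (i : Fin m),
      ∑ j, (((-A) i j : ℤ) : ℚ) * y j = -∑ j, (A i j : ℚ) * y j := by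
    intro y i
    rw [← Finset.sum_neg_distrib]
    refine Finset.sum_congr rfl (fun j _ => ?_)
    rw [Matrix.neg_apply]
    push_cast
    ring
  have hnegone : ∀ (y : Fin n → ℚ) (j : Fin n),
      ∑ j', (((-(1 : Matrix (Fin n) (Fin n) ℤ)) j j' : ℤ) : ℚ) * y j' = -y j := by
    intro y j
    rw [← sum_one_row y j, ← Finset.sum_neg_distrib]
    refine Finset.sum_congr rfl (fun j' _ => ?_)
    rw [Matrix.neg_apply]
    push_cast
    ring
  have hfeasMM : ∀ i, ∑ j, (MM i j : ℚ) * xstar j ≤ (dd i : ℚ) := by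
    rintro ((i | i) | (j | j))
    · simpa [hMMdef, hdddef] using hfeas i
    · simp only [hMMdef, hdddef, Matrix.fromRows_apply_inl, Matrix.fromRows_apply_inr,
        Sum.elim_inl, Sum.elim_inr]
      rw [hnegrow]
      push_cast
      have := Int.floor_le (S i)
      rw [hSdef] at this
      simp only at this
      linarith
    · simp only [hMMdef, hdddef, Matrix.fromRows_apply_inl, Matrix.fromRows_apply_inr,
        Sum.elim_inl, Sum.elim_inr]
      rw [sum_one_row]
      exact Int.le_ceil _
    · simp only [hMMdef, hdddef, Matrix.fromRows_apply_inl, Matrix.fromRows_apply_inr,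
        Sum.elim_inl, Sum.elim_inr]
      rw [hnegone]
      push_cast
      have := Int.floor_le (xstar j)
      linarith
  have hkerMM : ∀ v : Fin n → ℚ, (∀ i, ∑ j, (MM i j : ℚ) * v j = 0) → v = 0 := by
    intro v hv
    funext j
    have := hv (Sum.inr (Sum.inl j))
    simp only [hMMdef, Matrix.fromRows_apply_inr, Matrix.fromRows_apply_inl] at this
    rw [sum_one_row] at this
    simpa using this
  obtain ⟨z, hz⟩ := exists_int_solution MM hMMTU hkerMM dd xstar hfeasMM
  have hAz : ∀ i, ∑ j, (A i j : ℚ) * (z j : ℚ) ≤ (b i : ℚ) := by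
    intro i
    have := hz (Sum.inl (Sum.inl i))
    simpa [hMMdef, hdddef] using this
  have hAz2 : ∀ i, ((⌊S i⌋ : ℤ) : ℚ) ≤ ∑ j, (A i j : ℚ) * (z j : ℚ) := by
    intro i
    have := hz (Sum.inl (Sum.inr i))
    simp only [hMMdef, hdddef, Matrix.fromRows_apply_inl, Matrix.fromRows_apply_inr,
      Sum.elim_inl, Sum.elim_inr] at this
    rw [hnegrow] at this
    push_cast at this ⊢
    linarith
  have hTz : ∀ i, S i = (b i : ℚ) → ∑ j, (A i j : ℚ) * (z j : ℚ) = (b i : ℚ) := by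
    intro i hi
    have h1 := hAz i
    have h2 := hAz2 i
    rw [hi] at h2
    rw [Int.floor_intCast] at h2
    linarith
  refine ⟨z, fun i => ?_, ?_⟩
  · have := hAz i
    have h2 : ((∑ j, A i j * z j : ℤ) : ℚ) ≤ ((b i : ℤ) : ℚ) := by
      push_cast
      convert this using 1
    exact_mod_cast h2
  · -- objective equality via local perturbation
    set dv : Fin n → ℚ := fun j => (z j : ℚ) - xstar j with hdvdef
    set Ad : Fin m → ℚ := fun i => ∑ j, (A i j : ℚ) * dv j with hAddef
    have hAdeq : ∀ i, Ad i = (∑ j, (A i j : ℚ) * (z j : ℚ)) - S i := by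
      intro i
      rw [hAddef]
      simp only
      rw [hSdef]
      simp only
      rw [← Finset.sum_sub_distrib]
      refine Finset.sum_congr rfl (fun j _ => ?_)
      rw [hdvdef]
      ring
    set Pns : Finset (Fin m) := Finset.univ.filter (fun i => S i < (b i : ℚ)) with hPnsdef
    set E : Finset ℚ :=
      insert 1 (Pns.image (fun i => ((b i : ℚ) - S i) / (|Ad i| + 1))) with hEdef
    have hEne : E.Nonempty := ⟨1, Finset.mem_insert_self _ _⟩
    set ε : ℚ := E.min' hEne with hεdef
    have hεpos : 0 < ε := by
      rw [hεdef, Finset.lt_min'_iff]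
      intro q hq
      rw [hEdef] at hq
      rcases Finset.mem_insert.mp hq with rfl | hq
      · norm_num
      · obtain ⟨i, hi, rfl⟩ := Finset.mem_image.mp hq
        have hi' : S i < (b i : ℚ) := (Finset.mem_filter.mp hi).2
        have : (0:ℚ) < |Ad i| + 1 := by positivity
        exact div_pos (by linarith) this
    have hpert : ∀ σ : ℚ, |σ| = 1 →
        ∀ i, ∑ j, (A i j : ℚ) * (xstar j + (σ * ε) * dv j) ≤ (b i : ℚ) := by
      intro σ hσ i
      rw [sum_mul_addsmul]
      show S i + σ * ε * Ad i ≤ (b i : ℚ)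
      rcases lt_or_eq_of_le (hfeas i) with hlt | heq
      · have hiP : i ∈ Pns := Finset.mem_filter.mpr ⟨Finset.mem_univ _, hlt⟩
        have hmem : ((b i : ℚ) - S i) / (|Ad i| + 1) ∈ E :=
          Finset.mem_insert_of_mem (Finset.mem_image_of_mem _ hiP)
        have hεle : ε ≤ ((b i : ℚ) - S i) / (|Ad i| + 1) := Finset.min'_le _ _ hmem
        have hpos : (0:ℚ) < |Ad i| + 1 := by positivity
        have h1 : ε * (|Ad i| + 1) ≤ (b i : ℚ) - S i := (le_div_iff₀ hpos).mp hεle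
        have h2 : σ * ε * Ad i ≤ ε * |Ad i| := by
          calc σ * ε * Ad i ≤ |σ * ε * Ad i| := le_abs_self _
          _ = |σ| * |ε| * |Ad i| := by rw [abs_mul, abs_mul]
          _ = ε * |Ad i| := by rw [hσ, abs_of_pos hεpos]; ring
        have h3 : ε * |Ad i| ≤ ε * (|Ad i| + 1) := by nlinarith
        linarith
      · have heq' : S i = (b i : ℚ) := heq
        have hAd0 : Ad i = 0 := by
          rw [hAdeq i, hTz i heq', heq']
          ring
        rw [hAd0, mul_zero, add_zero]
        exact le_of_eq heq'
    have hD1 := hopt _ (hpert 1 (by norm_num))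
    have hD2 := hopt _ (hpert (-1) (by norm_num))
    rw [sum_mul_addsmul] at hD1 hD2
    have hD : ∑ j, c j * dv j = 0 := by nlinarith
    have : ∑ j, c j * (z j : ℚ) - ∑ j, c j * xstar j = ∑ j, c j * dv j := by
      rw [← Finset.sum_sub_distrib]
      refine Finset.sum_congr rfl (fun j _ => ?_)
      rw [hdvdef]
      ring
    linarith [this, hD]
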